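/- Suppose F satisfies the class F₁₁ condition F(x,y,z) = η(x){η(y)ω(z) + η(z)ω(y)} for some 1-form ω with ω(ξ)=0. Then the Nijenhuis-type tensor N(x,y,z) = F(φx,y,z) - F(x,y,φz) + F(x,φy,ξ)η(z) - F(φy,x,z) + F(y,x,φz) - F(y,φx,ξ)η(z) equals {η(x)ω(φy) - η(y)ω(φx)}·η(z), and consequently N(φx, φy, z) = 0 for all x, y, z. -/
import Mathlib

theorem stmt11 (V : Type*) [AddCommGroup V] [Module ℝ V]
    (φ : V →ₗ[ℝ] V) (ξ : V) (η : V →ₗ[ℝ] ℝ)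
    (hφξ : φ ξ = 0) (hφ2 : ∀ x : V, φ (φ x) = -x + η x • ξ)
    (hηφ : ∀ x : V, η (φ x) = 0) (hηξ : η ξ = 1)
    (g : V →ₗ[ℝ] V →ₗ[ℝ] ℝ) (hsym : ∀ x y : V, g x y = g y x)
    (hB : ∀ x y : V, g (φ x) (φ y) = - g x y + η x * η y)
    (ω : V →ₗ[ℝ] ℝ) (hω : ω ξ = 0)
    (F : V → V → V → ℝ)
    (hF : ∀ x y z : V, F x y z = η x * (η y * ω z + η z * ω y))
    (N : V → V → V → ℝ)
    (hN : ∀ x y z : V, N x y z = F (φ x) y z - F x y (φ z) + F x (φ y) ξ * η z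
          - F (φ y) x z + F y x (φ z) - F y (φ x) ξ * η z) :
    (∀ x y z : V, N x y z = (η x * ω (φ y) - η y * ω (φ x)) * η z) ∧
    (∀ x y z : V, N (φ x) (φ y) z = 0) := by
  have h1 : ∀ x y z : V, N x y z = (η x * ω (φ y) - η y * ω (φ x)) * η z := by
    intro x y z
    simp only [hN, hF, hηφ, hηξ, hω]
    ring
  refine ⟨h1, fun x y z => ?_⟩
  rw [h1]
  simp [hηφ]
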